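/- Let M, Θ_y, Θ_w, Θ_v be n×n diagonal real matrices with strictly positive diagonal entries (the lumped mass matrix case, D_M = M), let α > 0, and let L be any n×n real matrix. Define the Schur complement S := L (M + Θ_y)⁻¹ Lᵀ + (1/α) M − (1/α²) (Θ_w⁻¹ + Θ_v⁻¹ + (1/α) M⁻¹)⁻¹, the diagonal matrix M̂ := [(1/α) M − (1/α²) (Θ_w⁻¹ + Θ_v⁻¹ + (1/α) M⁻¹)⁻¹]^{1/2} (M + Θ_y)^{1/2} (square roots of diagonal positive definite matrices taken entrywise on the diagonal), and the approximation Ŝ := (L + M̂) (M + Θ_y)⁻¹ (L + M̂)ᵀ. If L + M̂ is invertible, then every eigenvalue λ of Ŝ⁻¹ S is real and satisfies λ ≥ 1/2. -/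

import Mathlib

open Matrix
open scoped ComplexOrder

/-- Lumped mass matrix case: with `M, Θ_y, Θ_w, Θ_v` diagonal positive definite,
`S = L (M + Θ_y)⁻¹ Lᵀ + (1/α) M - (1/α²) (Θ_w⁻¹ + Θ_v⁻¹ + (1/α) M⁻¹)⁻¹`,
`M̂` the diagonal matrix with entries
`√(((1/α) M - (1/α²)(Θ_w⁻¹ + Θ_v⁻¹ + (1/α) M⁻¹)⁻¹)ᵢᵢ) · √((M + Θ_y)ᵢᵢ)`,
and `Ŝ = (L + M̂)(M + Θ_y)⁻¹(L + M̂)ᵀ` with `L + M̂` invertible,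
every eigenvalue `μ` of `Ŝ⁻¹ S` is real and satisfies `μ ≥ 1/2`. -/
theorem lumped_preconditioned_schur_eig_half {n : ℕ}
    (m dy dw dv : Fin n → ℝ)
    (hm : ∀ i, 0 < m i) (hdy : ∀ i, 0 < dy i) (hdw : ∀ i, 0 < dw i) (hdv : ∀ i, 0 < dv i)
    (α : ℝ) (hα : 0 < α)
    (L : Matrix (Fin n) (Fin n) ℝ)
    (A S Mhat Shat : Matrix (Fin n) (Fin n) ℝ)
    (hA : A = α⁻¹ • Matrix.diagonal m - (α ^ 2)⁻¹ •
      ((Matrix.diagonal dw)⁻¹ + (Matrix.diagonal dv)⁻¹ + α⁻¹ • (Matrix.diagonal m)⁻¹)⁻¹)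
    (hS : S = L * (Matrix.diagonal m + Matrix.diagonal dy)⁻¹ * Lᵀ + A)
    (hMhat : Mhat = Matrix.diagonal (fun i =>
      Real.sqrt (A i i) * Real.sqrt ((Matrix.diagonal m + Matrix.diagonal dy) i i)))
    (hShat : Shat = (L + Mhat) * (Matrix.diagonal m + Matrix.diagonal dy)⁻¹ * (L + Mhat)ᵀ)
    (hLM : IsUnit (L + Mhat))
    (μ : ℂ) (v : Fin n → ℂ) (hv : v ≠ 0)
    (heig : ((Shat⁻¹ * S).map Complex.ofReal) *ᵥ v = μ • v) :
    μ.im = 0 ∧ 1 / 2 ≤ μ.re := by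
  classical
  -- inverse of diagonal matrices
  have hinv_diag : ∀ (u : Fin n → ℝ), (∀ i, u i ≠ 0) →
      (Matrix.diagonal u)⁻¹ = Matrix.diagonal (fun i => (u i)⁻¹) := by
    intro u hu
    apply Matrix.inv_eq_right_inv
    rw [Matrix.diagonal_mul_diagonal]
    have h : (fun i => u i * (u i)⁻¹) = fun _ => (1:ℝ) := funext fun i => mul_inv_cancel₀ (hu i)
    rw [h, Matrix.diagonal_one]
  set d : Fin n → ℝ := fun i => m i + dy i with hd_def
  have hd : ∀ i, 0 < d i := fun i => add_pos (hm i) (hdy i)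
  set a : Fin n → ℝ :=
    fun i => α⁻¹ * m i - (α ^ 2)⁻¹ * ((dw i)⁻¹ + (dv i)⁻¹ + α⁻¹ * (m i)⁻¹)⁻¹ with ha_def
  have ha : ∀ i, 0 < a i := by
    intro i
    have hmi := hm i; have hwi := hdw i; have hvi := hdv i
    have hs0 : 0 < α⁻¹ * (m i)⁻¹ := by positivity
    have hs : α⁻¹ * (m i)⁻¹ < (dw i)⁻¹ + (dv i)⁻¹ + α⁻¹ * (m i)⁻¹ := by
      have h1 : 0 < (dw i)⁻¹ + (dv i)⁻¹ := by positivity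
      linarith
    have h1 : ((dw i)⁻¹ + (dv i)⁻¹ + α⁻¹ * (m i)⁻¹)⁻¹ < (α⁻¹ * (m i)⁻¹)⁻¹ :=
      inv_strictAnti₀ hs0 hs
    have h2 : (α⁻¹ * (m i)⁻¹)⁻¹ = α * m i := by
      rw [mul_inv, inv_inv, inv_inv]
    have h3 : (α ^ 2)⁻¹ * ((dw i)⁻¹ + (dv i)⁻¹ + α⁻¹ * (m i)⁻¹)⁻¹
        < (α ^ 2)⁻¹ * (α * m i) := by
      have := h2 ▸ h1
      exact mul_lt_mul_of_pos_left this (by positivity)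
    have h4 : (α ^ 2)⁻¹ * (α * m i) = α⁻¹ * m i := by
      field_simp
    simp only [ha_def]
    linarith [h4 ▸ h3]
  -- A is the diagonal matrix of a
  have hA' : A = Matrix.diagonal a := by
    rw [hA, hinv_diag dw (fun i => (hdw i).ne'), hinv_diag dv (fun i => (hdv i).ne'),
      hinv_diag m (fun i => (hm i).ne')]
    have h1 : (Matrix.diagonal (fun i => (dw i)⁻¹) + Matrix.diagonal (fun i => (dv i)⁻¹)
        + α⁻¹ • Matrix.diagonal (fun i => (m i)⁻¹))
        = Matrix.diagonal (fun i => (dw i)⁻¹ + (dv i)⁻¹ + α⁻¹ * (m i)⁻¹) := by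
      ext i j
      by_cases h : i = j <;> simp [Matrix.diagonal_apply, h]
    rw [h1, hinv_diag _ (fun i =>
      (add_pos (add_pos (inv_pos.2 (hdw i)) (inv_pos.2 (hdv i)))
        (mul_pos (inv_pos.2 hα) (inv_pos.2 (hm i)))).ne')]
    ext i j
    by_cases h : i = j <;> simp [Matrix.diagonal_apply, h, ha_def]
  -- D := M + Θ_y
  have hDdiag : Matrix.diagonal m + Matrix.diagonal dy = Matrix.diagonal d := by
    ext i j; by_cases h : i = j <;> simp [Matrix.diagonal_apply, h, hd_def]
  set Dinv : Matrix (Fin n) (Fin n) ℝ := Matrix.diagonal (fun i => (d i)⁻¹) with hDinv_def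
  have hDinv : (Matrix.diagonal m + Matrix.diagonal dy)⁻¹ = Dinv := by
    rw [hDdiag, hinv_diag d (fun i => (hd i).ne')]
  -- Mhat as a clean diagonal
  have hMhat' : Mhat = Matrix.diagonal (fun i => Real.sqrt (a i) * Real.sqrt (d i)) := by
    rw [hMhat, hA', hDdiag]
    simp [Matrix.diagonal_apply_eq]
  -- key identity : Mhat * Dinv * Mhat = A
  have hkey : Mhat * Dinv * Mhat = A := by
    rw [hMhat', hA', hDinv_def, Matrix.diagonal_mul_diagonal, Matrix.diagonal_mul_diagonal]
    refine congrArg Matrix.diagonal (funext fun i => ?_)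
    show Real.sqrt (a i) * Real.sqrt (d i) * (d i)⁻¹ * (Real.sqrt (a i) * Real.sqrt (d i)) = a i
    have h1 : Real.sqrt (a i) * Real.sqrt (a i) = a i := Real.mul_self_sqrt (ha i).le
    have h2 : Real.sqrt (d i) * Real.sqrt (d i) = d i := Real.mul_self_sqrt (hd i).le
    have hdne : d i ≠ 0 := (hd i).ne'
    calc Real.sqrt (a i) * Real.sqrt (d i) * (d i)⁻¹ * (Real.sqrt (a i) * Real.sqrt (d i))
        = (Real.sqrt (a i) * Real.sqrt (a i)) * ((Real.sqrt (d i) * Real.sqrt (d i)) * (d i)⁻¹) := by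
          ring
      _ = a i := by rw [h1, h2, mul_inv_cancel₀ hdne, mul_one]
  have hMhatT : Mhatᵀ = Mhat := by rw [hMhat']; exact Matrix.diagonal_transpose _
  -- S + S = Shat + T
  set T : Matrix (Fin n) (Fin n) ℝ := (L - Mhat) * Dinv * (L - Mhat)ᵀ with hT_def
  have hSsum : S + S = Shat + T := by
    rw [hS, hShat, hDinv, hT_def, Matrix.transpose_add, Matrix.transpose_sub, hMhatT, ← hkey]
    noncomm_ring
  -- invertibility facts
  have hdetLM : IsUnit (L + Mhat).det := (Matrix.isUnit_iff_isUnit_det _).1 hLM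
  have hdetDinv : IsUnit Dinv.det := by
    rw [hDinv_def, Matrix.det_diagonal]
    exact isUnit_iff_ne_zero.2 (Finset.prod_ne_zero_iff.2
      (fun i _ => inv_ne_zero (hd i).ne'))
  have hdetShat : IsUnit Shat.det := by
    rw [hShat, hDinv, Matrix.det_mul, Matrix.det_mul, Matrix.det_transpose]
    exact (hdetLM.mul hdetDinv).mul hdetLM
  -- complexification
  set C : ℝ →+* ℂ := Complex.ofRealHom with hC_def
  have hCeq : ∀ X : Matrix (Fin n) (Fin n) ℝ, X.map Complex.ofReal = X.map C := fun _ => rfl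
  have hCT : ∀ X : Matrix (Fin n) (Fin n) ℝ, (Xᵀ).map C = (X.map C)ᴴ := by
    intro X; ext i j
    simp [Matrix.conjTranspose_apply, Matrix.map_apply, Complex.conj_ofReal, hC_def]
  have hCadd : ∀ X Y : Matrix (Fin n) (Fin n) ℝ, (X + Y).map C = X.map C + Y.map C := by
    intro X Y; ext i j; simp [Matrix.map_apply, hC_def]
  -- eigen relation over ℂ
  have hSv : (S.map C) *ᵥ v = μ • ((Shat.map C) *ᵥ v) := by
    have h1 : (Shat.map C) *ᵥ (((Shat⁻¹ * S).map C) *ᵥ v) = (S.map C) *ᵥ v := by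
      rw [Matrix.mulVec_mulVec, ← Matrix.map_mul, ← Matrix.mul_assoc,
        Matrix.mul_nonsing_inv _ hdetShat, Matrix.one_mul]
    rw [hCeq] at heig
    rw [heig, Matrix.mulVec_smul] at h1
    exact h1.symm
  -- positive definiteness of Dinv over ℂ
  have hDc : (Dinv.map C).PosDef := by
    rw [hDinv_def, Matrix.diagonal_map (map_zero C)]
    refine Matrix.posDef_diagonal_iff.2 fun i => ?_
    show (0:ℂ) < ((d i)⁻¹ : ℝ)
    exact Complex.zero_lt_real.2 (inv_pos.2 (hd i))
  -- Shat over ℂ as Ecᴴ * Dc * Ec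
  set Bc : Matrix (Fin n) (Fin n) ℂ := (L + Mhat).map C with hBc_def
  have hShatc : Shat.map C = (Bcᴴ)ᴴ * (Dinv.map C) * Bcᴴ := by
    rw [hShat, hDinv, Matrix.map_mul, Matrix.map_mul, hCT, Matrix.conjTranspose_conjTranspose]
  have hdetBcH : IsUnit (Bcᴴ).det := by
    have hdet : Bc.det = ((L + Mhat).det : ℝ) := by
      rw [hBc_def, ← RingHom.mapMatrix_apply, ← RingHom.map_det]
      rfl
    rw [Matrix.det_conjTranspose, hdet]
    exact isUnit_iff_ne_zero.2 (star_ne_zero.2 (Complex.ofReal_ne_zero.2 hdetLM.ne_zero))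
  have hw : Bcᴴ *ᵥ v ≠ 0 := by
    intro h0
    apply hv
    have h1 : (Bcᴴ)⁻¹ *ᵥ (Bcᴴ *ᵥ v) = v := by
      rw [Matrix.mulVec_mulVec, Matrix.nonsing_inv_mul _ hdetBcH, Matrix.one_mulVec]
    rw [h0, Matrix.mulVec_zero] at h1
    exact h1.symm
  -- p > 0
  have hppos : (0:ℂ) < star v ⬝ᵥ ((Shat.map C) *ᵥ v) := by
    rw [hShatc]
    simpa only [star_mulVec, Matrix.dotProduct_mulVec, Matrix.vecMul_vecMul] using
      hDc.dotProduct_mulVec_pos hw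
  -- T over ℂ is PSD
  have hTc : (T.map C).PosSemidef := by
    have : T.map C = ((L - Mhat).map C) * (Dinv.map C) * ((L - Mhat).map C)ᴴ := by
      rw [hT_def, Matrix.map_mul, Matrix.map_mul, hCT]
    rw [this]
    exact hDc.posSemidef.mul_mul_conjTranspose_same _
  -- T v = (2μ - 1) • Shat v
  have hTv : (T.map C) *ᵥ v = ((2:ℂ) * μ - 1) • ((Shat.map C) *ᵥ v) := by
    have h1 : (S.map C + S.map C) *ᵥ v = (Shat.map C + T.map C) *ᵥ v := by
      rw [← hCadd, ← hCadd, hSsum]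
    rw [Matrix.add_mulVec, Matrix.add_mulVec, hSv] at h1
    have := h1.symm
    rw [eq_comm] at h1
    -- Shat v + T v = μ • w + μ • w
    have h2 : (T.map C) *ᵥ v = μ • ((Shat.map C) *ᵥ v) + μ • ((Shat.map C) *ᵥ v)
        - (Shat.map C) *ᵥ v := by
      rw [← h1]; abel
    rw [h2]
    module
  -- final arithmetic
  set p : ℂ := star v ⬝ᵥ ((Shat.map C) *ᵥ v) with hp_def
  have hr : star v ⬝ᵥ ((T.map C) *ᵥ v) = ((2:ℂ) * μ - 1) * p := by
    rw [hTv, dotProduct_smul, smul_eq_mul]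
  have hrnn : (0:ℂ) ≤ star v ⬝ᵥ ((T.map C) *ᵥ v) := hTc.dotProduct_mulVec_nonneg v
  obtain ⟨hpre, hpim⟩ := Complex.lt_def.1 hppos
  obtain ⟨hrre, hrim⟩ := Complex.le_def.1 hrnn
  rw [hr] at hrre hrim
  simp only [Complex.zero_re, Complex.zero_im] at hpre hpim hrre hrim
  have hpim' : p.im = 0 := hpim.symm
  rw [Complex.mul_im, Complex.sub_im, Complex.sub_re, Complex.mul_im, Complex.mul_re,
    hpim'] at hrim
  simp only [Complex.one_im, Complex.one_re, mul_zero, sub_zero, zero_sub] at hrim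
  have h2re : (2:ℂ).re = 2 := by norm_num
  have h2im : (2:ℂ).im = 0 := by norm_num
  rw [h2re, h2im] at hrim
  -- hrim : 0 = ... * 0 + (2 * μ.im + ...) * p.re  roughly; normalize
  have hμim : μ.im = 0 := by
    have h0 : μ.im * p.re = 0 := by linarith
    rcases mul_eq_zero.1 h0 with h | h
    · exact h
    · exact absurd h hpre.ne'
  refine ⟨hμim, ?_⟩
  rw [Complex.mul_re, Complex.sub_re, Complex.sub_im, Complex.mul_re, Complex.mul_im,
    hpim', hμim, h2re, h2im] at hrre
  simp only [Complex.one_re, Complex.one_im, mul_zero, zero_mul, sub_zero, add_zero,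
    zero_add, zero_sub, mul_comm] at hrre
  nlinarith [hpre, hrre]
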